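/- Fix γ > −1 and n ≥ 0. With G_{n,k}^γ(z) := (1/2π)∫₀^{2π} e^{i(n−2k)θ} L_n^γ((i/2)(z̄e^{iθ} − ze^{−iθ})) dθ, one has for all z ∈ 𝔻 and θ ∈ ℝ the Fourier expansion L_n^γ((i/2)(z̄e^{iθ} − ze^{−iθ})) = Σ_{k=0}^{n} e^{−i(n−2k)θ} G_{n,k}^γ(z); moreover, for 0 ≤ k ≤ n, G_{n,k}^γ is a polynomial in (z, z̄) of total degree n whose degree-n part is g_{n,k}^γ · z^{n−k} z̄^k with g_{n,k}^γ = (−1)^k binom(n,k)/(2i)^n; in particular G_{n,k}^γ is not identically zero. -/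

import Mathlib

open MeasureTheory Complex Metric Real Set

noncomputable section

/-! ## Geometry of the Euclidean disk and its space of lines (fan-beam coordinates) -/

/-- The chord of the closed unit disk through the boundary point `exp (I β)` with incoming
direction `exp (I (β + π + α))`, parametrized by arclength `t ∈ [0, 2 cos α]`. -/
def chord (β α t : ℝ) : ℂ :=
  Complex.exp ((β : ℂ) * Complex.I) +
    (t : ℂ) * Complex.exp (((β + π + α : ℝ) : ℂ) * Complex.I)

/-- The X-ray transform `I₀` in fan-beam coordinates. -/
def XRT (f : ℂ → ℂ) (β α : ℝ) : ℂ :=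
  ∫ t in (0:ℝ)..(2 * Real.cos α), f (chord β α t)

/-- The fan-beam coordinate `α₋(z, θ)` of the unique chord through `z` with direction `exp (I θ)`,
determined by `sin α₋ = Im (z * exp (-I θ))`. -/
def alpham (z : ℂ) (θ : ℝ) : ℝ :=
  Real.arcsin ((z * Complex.exp (-(θ : ℂ) * Complex.I)).im)

/-- The fan-beam coordinate `β₋(z, θ)`, determined by `β₋ + α₋ + π = θ`. -/
def betam (z : ℂ) (θ : ℝ) : ℝ := θ - π - alpham z θ

/-- Reduction modulo `2π` to the fundamental interval `(0, 2π]`. -/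
def wrap (x : ℝ) : ℝ := toIocMod Real.two_pi_pos 0 x

/-- The backprojection operator `I₀^♯`. -/
def BP (g : ℝ × ℝ → ℂ) (z : ℂ) : ℂ :=
  ∫ θ in (0:ℝ)..(2 * π), g (wrap (betam z θ), alpham z θ)

/-- The weighted backprojection operator `I₀^♯ μ^{-2γ-1}`, where `μ(β, α) = cos α`. -/
def BPW (γ : ℝ) (g : ℝ × ℝ → ℂ) : ℂ → ℂ :=
  BP fun p => ((Real.cos p.2 ^ (-(2 * γ) - 1) : ℝ) : ℂ) * g p

/-- The rectangle `(0, 2π] × [-π/2, π/2]` modelling the space of lines `∂₊S𝔻`. -/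
def Rect : Set (ℝ × ℝ) := Set.Ioc (0:ℝ) (2 * π) ×ˢ Set.Icc (-(π / 2)) (π / 2)

/-- The measure `μ^{-2γ} dβ dα` on `∂₊S𝔻`, where `μ(β, α) = cos α`. -/
def bdryMeasure (γ : ℝ) : Measure (ℝ × ℝ) :=
  ((volume : Measure (ℝ × ℝ)).restrict Rect).withDensity
    fun p => ENNReal.ofReal (Real.cos p.2 ^ (-(2 * γ)))

/-- The measure `d^γ dz` on the closed unit disk, where `d(z) = 1 - |z|²`. -/
def diskMeasure (γ : ℝ) : Measure ℂ :=
  ((volume : Measure ℂ).restrict (Metric.closedBall 0 1)).withDensity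
    fun z => ENNReal.ofReal ((1 - ‖z‖ ^ 2) ^ γ)

/-- `L n` is the monic orthogonal polynomial of degree `n` on `[-1, 1]` for the weight
`(1 - x²)^(γ + 1/2)`. -/
def IsMonicOrtho (γ : ℝ) (L : ℕ → Polynomial ℝ) : Prop :=
  ∀ n, (L n).Monic ∧ (L n).natDegree = n ∧
    ∀ m, m < n →
      (∫ x in (-1:ℝ)..(1:ℝ), (L n).eval x * x ^ m * (1 - x ^ 2) ^ (γ + 1/2)) = 0

/-- The functions `ψ_{n,k}^γ = μ^{2γ+1} ((-1)^n / 2π) e^{i(n-2k)(β+α)} L_n^γ (sin α)`. -/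
def psiF (γ : ℝ) (L : ℕ → Polynomial ℝ) (n : ℕ) (k : ℤ) (p : ℝ × ℝ) : ℂ :=
  ((Real.cos p.2 ^ (2 * γ + 1) : ℝ) : ℂ) * (((-1 : ℝ) ^ n / (2 * π) : ℝ) : ℂ) *
    Complex.exp (Complex.I * ((n : ℂ) - 2 * (k : ℂ)) * ((p.1 + p.2 : ℝ) : ℂ)) *
    (((L n).eval (Real.sin p.2) : ℝ) : ℂ)

/-- The generalized Zernike polynomials
`G_{n,k}^γ (z) = (1/2π) ∫₀^{2π} e^{i(n-2k)θ} L_n^γ ((i/2)(z̄ e^{iθ} - z e^{-iθ})) dθ`. -/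
def GZ (γ : ℝ) (L : ℕ → Polynomial ℝ) (n : ℕ) (k : ℤ) (z : ℂ) : ℂ :=
  ((1 / (2 * π) : ℝ) : ℂ) * ∫ θ in (0:ℝ)..(2 * π),
    Complex.exp (Complex.I * ((n : ℂ) - 2 * (k : ℂ)) * (θ : ℂ)) *
      Polynomial.aeval
        ((Complex.I / 2) *
          ((starRingEnd ℂ) z * Complex.exp ((θ : ℂ) * Complex.I) -
            z * Complex.exp (-(θ : ℂ) * Complex.I))) (L n)

/-- `L²(𝔻, d^γ dz)`-norm. -/
def dNorm (γ : ℝ) (f : ℂ → ℂ) : ℝ := Real.sqrt (∫ z, ‖f z‖ ^ 2 ∂(diskMeasure γ))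

/-- `L²(∂₊S𝔻, μ^{-2γ} dβ dα)`-norm. -/
def bNorm (γ : ℝ) (g : ℝ × ℝ → ℂ) : ℝ := Real.sqrt (∫ p, ‖g p‖ ^ 2 ∂(bdryMeasure γ))

/-- `G_{n,k}^γ` normalized to unit norm in `L²(𝔻, d^γ dz)`. -/
def Ghat (γ : ℝ) (L : ℕ → Polynomial ℝ) (n : ℕ) (k : ℤ) (z : ℂ) : ℂ :=
  (((dNorm γ (GZ γ L n k))⁻¹ : ℝ) : ℂ) * GZ γ L n k z

/-- `ψ_{n,k}^γ` normalized to unit norm in `L²(∂₊S𝔻, μ^{-2γ} dβ dα)`. -/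
def psihat (γ : ℝ) (L : ℕ → Polynomial ℝ) (n : ℕ) (k : ℤ) (p : ℝ × ℝ) : ℂ :=
  (((bNorm γ (psiF γ L n k))⁻¹ : ℝ) : ℂ) * psiF γ L n k p

/-- The squared singular values `(σ_{n,k}^γ)²`. -/
def sigSq (γ : ℝ) (n k : ℕ) : ℝ :=
  2 ^ (2 * γ + 2) * π * (n.choose k) *
    Real.Gamma ((n : ℝ) - k + γ + 1) * Real.Gamma ((k : ℝ) + γ + 1) /
      Real.Gamma ((n : ℝ) + 2 * γ + 2)

/-- The singular values `σ_{n,k}^γ ≥ 0`. -/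
def sig (γ : ℝ) (n k : ℕ) : ℝ := Real.sqrt (sigSq γ n k)

/-- The Beta function `B(x,y) = Γ(x)Γ(y)/Γ(x+y)`. -/
def betaFn (x y : ℝ) : ℝ := Real.Gamma x * Real.Gamma y / Real.Gamma (x + y)

/-! ## Differential operators -/

/-- Radial derivative `∂_ρ` in polar coordinates `z = ρ e^{iω}`. -/
def dRho (f : ℂ → ℂ) (z : ℂ) : ℂ :=
  deriv (fun r : ℝ => f ((r : ℂ) * Complex.exp ((z.arg : ℂ) * Complex.I))) ‖z‖

/-- Angular derivative `∂_ω` in polar coordinates `z = ρ e^{iω}`. -/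
def dOmega (f : ℂ → ℂ) (z : ℂ) : ℂ :=
  deriv (fun w : ℝ => f ((‖z‖ : ℂ) * Complex.exp ((w : ℂ) * Complex.I))) z.arg

/-- The operator `𝓛_γ = -(1-ρ²)∂_ρ² - (ρ⁻¹ - (3+2γ)ρ)∂_ρ - ρ⁻²∂_ω² + (γ+1)²`. -/
def Lop (γ : ℝ) (f : ℂ → ℂ) (z : ℂ) : ℂ :=
  -(1 - (‖z‖ : ℂ) ^ 2) * dRho (dRho f) z -
    ((‖z‖ : ℂ)⁻¹ - (3 + 2 * (γ : ℂ)) * (‖z‖ : ℂ)) * dRho f z -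
    ((‖z‖ : ℂ) ^ 2)⁻¹ * dOmega (dOmega f) z + ((γ : ℂ) + 1) ^ 2 * f z

/-- `∂_β` on `∂₊S𝔻`. -/
def dBeta (g : ℝ × ℝ → ℂ) (p : ℝ × ℝ) : ℂ := deriv (fun b : ℝ => g (b, p.2)) p.1

/-- `∂_α` on `∂₊S𝔻`. -/
def dAlpha (g : ℝ × ℝ → ℂ) (p : ℝ × ℝ) : ℂ := deriv (fun a : ℝ => g (p.1, a)) p.2

/-- The operator `T = ∂_β - ∂_α`. -/
def Tline (g : ℝ × ℝ → ℂ) (p : ℝ × ℝ) : ℂ := dBeta g p - dAlpha g p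

/-- The power `μ^e = (cos α)^e` as a complex-valued function on `∂₊S𝔻`. -/
def muC (e : ℝ) (p : ℝ × ℝ) : ℂ := ((Real.cos p.2 ^ e : ℝ) : ℂ)

/-- The operator `𝓣_γ = -μ^{2γ} T μ^{-2γ} T + γ²`. -/
def Tgam (γ : ℝ) (g : ℝ × ℝ → ℂ) (p : ℝ × ℝ) : ℂ :=
  -muC (2 * γ) p * Tline (fun q => muC (-(2 * γ)) q * Tline g q) p + (γ : ℂ) ^ 2 * g p

/-! ## Scattering relations and the space `C^∞_{α,+,+}(∂₊S𝔻)` -/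

/-- The scattering relation `𝒮(β, α) = (β + π + 2α, π - α)`. -/
def Scat (p : ℝ × ℝ) : ℝ × ℝ := (p.1 + π + 2 * p.2, π - p.2)

/-- The antipodal scattering relation `𝒮_A(β, α) = (β + π + 2α, -α)`. -/
def ScatA (p : ℝ × ℝ) : ℝ × ℝ := (p.1 + π + 2 * p.2, -p.2)

/-- Membership in `C^∞_{α,+,+}(∂₊S𝔻)`: `f`, given on the strip `ℝ × [-π/2, π/2]` (2π-periodically
in β), has an even extension through the scattering relation which is smooth on all of `∂S𝔻`
(modelled as a doubly 2π-periodic smooth function on `ℝ²` invariant under `𝒮`), and `f` is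
invariant under the antipodal scattering relation. -/
def MemCapp (f : ℝ × ℝ → ℂ) : Prop :=
  ∃ F : ℝ × ℝ → ℂ, ContDiff ℝ (⊤ : ℕ∞) F ∧
    (∀ p : ℝ × ℝ, F (p.1 + 2 * π, p.2) = F p) ∧
    (∀ p : ℝ × ℝ, F (p.1, p.2 + 2 * π) = F p) ∧
    (∀ p : ℝ × ℝ, F (Scat p) = F p) ∧
    (∀ p : ℝ × ℝ, p.2 ∈ Set.Icc (-(π / 2)) (π / 2) → F (ScatA p) = F p) ∧
    (∀ p : ℝ × ℝ, p.2 ∈ Set.Icc (-(π / 2)) (π / 2) → f p = F p)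

/-- `C^∞(𝔻)`: smooth up to the boundary of the closed unit disk. -/
def CinfDisk (f : ℂ → ℂ) : Prop := ContDiffOn ℝ (⊤ : ℕ∞) f (Metric.closedBall 0 1)

end

noncomputable section

lemma wInt {e : ℝ} (he : -1 < e) :
    IntervalIntegrable (fun x : ℝ => (1 - x^2) ^ e) volume (-1) 1 := by
  have h01 : IntervalIntegrable (fun x : ℝ => (1 - x^2) ^ e) volume 0 1 := by
    have h1 : IntervalIntegrable (fun x : ℝ => (1 - x) ^ e) volume 0 1 := by
      have := (intervalIntegral.intervalIntegrable_rpow' he (a := 0) (b := 1)).comp_sub_left 1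
      simpa using this.symm
    have hc : ContinuousOn (fun x : ℝ => (1 + x) ^ e) (Set.uIcc (0:ℝ) 1) := by
      apply ContinuousOn.rpow_const (by fun_prop)
      intro x hx
      rw [Set.uIcc_of_le (by norm_num)] at hx
      left; nlinarith [hx.1]
    have h2 := h1.mul_continuousOn hc
    apply h2.congr
    intro x hx
    show (1 - x) ^ e * (1 + x) ^ e = (1 - x ^ 2) ^ e
    rw [Set.uIoc_of_le (by norm_num : (0:ℝ) ≤ 1)] at hx
    rw [show (1:ℝ) - x^2 = (1-x)*(1+x) by ring, Real.mul_rpow (by linarith [hx.2]) (by linarith [hx.1])]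
  have hneg : IntervalIntegrable (fun x : ℝ => (1 - x^2) ^ e) volume (-1) 0 := by
    have := (IntervalIntegrable.iff_comp_neg (by simp)).mp h01
    simp only [neg_zero, neg_one_sq] at this
    have : IntervalIntegrable (fun x : ℝ => (1 - x^2) ^ e) volume 0 (-1) := by
      apply this.congr
      intro x _
      simp [neg_sq]
    exact this.symm
  exact hneg.trans h01

lemma polyWInt {e : ℝ} (he : -1 < e) {g : ℝ → ℝ} (hg : Continuous g) :
    IntervalIntegrable (fun x : ℝ => g x * (1 - x^2) ^ e) volume (-1) 1 :=
  (wInt he).continuousOn_mul hg.continuousOn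

lemma coeff_comp_neg_X (p : Polynomial ℝ) (j : ℕ) :
    (p.comp (-Polynomial.X)).coeff j = (-1)^j * p.coeff j := by
  induction p using Polynomial.induction_on' with
  | add p q hp hq => simp [hp, hq, mul_add]
  | monomial k a =>
      simp only [Polynomial.monomial_comp, Polynomial.coeff_monomial]
      rw [show (-Polynomial.X : Polynomial ℝ)^k = Polynomial.C ((-1:ℝ)^k) * Polynomial.X^k by
        rw [neg_pow]; simp [Polynomial.C_pow]]
      rw [← mul_assoc, ← Polynomial.C_mul, Polynomial.coeff_C_mul, Polynomial.coeff_X_pow]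
      by_cases h : j = k
      · subst h; simp; ring
      · simp [h, Ne.symm h]

lemma parity (γ : ℝ) (hγ : -1 < γ) (L : ℕ → Polynomial ℝ) (hL : IsMonicOrtho γ L)
    (n j : ℕ) (hj : (n + j) % 2 = 1) : (L n).coeff j = 0 := by
  set e : ℝ := γ + 1/2 with he_def
  have he : (-1:ℝ) < e := by rw [he_def]; linarith
  obtain ⟨hmon, hdeg, horth⟩ := hL n
  set P : Polynomial ℝ := L n with hP
  set D : Polynomial ℝ := P - Polynomial.C ((-1:ℝ)^n) * P.comp (-Polynomial.X) with hD
  have hDcoeff : ∀ i, D.coeff i = (1 - (-1:ℝ)^(n+i)) * P.coeff i := by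
    intro i
    simp only [hD, Polynomial.coeff_sub, Polynomial.coeff_C_mul, coeff_comp_neg_X, pow_add]
    ring
  have hDeval : ∀ x : ℝ, D.eval x = P.eval x - (-1:ℝ)^n * P.eval (-x) := by
    intro x; simp [hD]
  suffices hD0 : D = 0 by
    have h0 := hDcoeff j
    rw [hD0] at h0
    simp only [Polynomial.coeff_zero] at h0
    have hodd : (-1:ℝ)^(n+j) = -1 := Odd.neg_one_pow (Nat.odd_iff.mpr hj)
    rw [hodd] at h0
    have := h0.symm
    linarith [this]
  by_contra hDne
  -- degree of D < n
  have hcoeffn : D.coeff n = 0 := by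
    rw [hDcoeff n]
    have : (-1:ℝ)^(n+n) = 1 := Even.neg_one_pow ⟨n, by ring⟩
    rw [this]; ring
  have hDle : D.natDegree ≤ n := by
    apply le_trans (Polynomial.natDegree_sub_le _ _)
    simp only [max_le_iff]
    constructor
    · exact le_of_eq hdeg
    · apply le_trans (Polynomial.natDegree_mul_le)
      apply le_trans (by simp : Polynomial.natDegree (Polynomial.C ((-1:ℝ)^n)) + (P.comp (-Polynomial.X)).natDegree ≤ (P.comp (-Polynomial.X)).natDegree)
      apply le_trans (Polynomial.natDegree_comp_le)
      simp [hdeg]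
  have hDlt : D.natDegree < n := by
    rcases lt_or_eq_of_le hDle with h | h
    · exact h
    · exfalso
      exact hDne (Polynomial.leadingCoeff_eq_zero.mp (by rw [Polynomial.leadingCoeff, h]; exact hcoeffn))
  -- orthogonality of D
  have hPnegorth : ∀ m, m < n → (∫ x in (-1:ℝ)..1, P.eval (-x) * x^m * (1-x^2)^e) = 0 := by
    intro m hm
    have h3 := intervalIntegral.integral_comp_neg (a := (-1:ℝ)) (b := 1)
      (fun x => P.eval x * x^m * (1-x^2)^e)
    simp only [neg_neg] at h3
    have h2 : ∀ x : ℝ, P.eval (-x) * (-x)^m * (1-(-x)^2)^e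
        = (-1:ℝ)^m * (P.eval (-x) * x^m * (1-x^2)^e) := by
      intro x; rw [neg_pow, neg_sq]; ring
    simp only [h2] at h3
    rw [intervalIntegral.integral_const_mul, horth m hm] at h3
    have hne : ((-1:ℝ)^m) ≠ 0 := by positivity
    field_simp at h3
    exact (mul_eq_zero.mp h3).resolve_left hne
  have horthD : ∀ m, m < n → (∫ x in (-1:ℝ)..1, D.eval x * x^m * (1-x^2)^e) = 0 := by
    intro m hm
    have h1 : ∀ x : ℝ, D.eval x * x^m * (1-x^2)^e
        = P.eval x * x^m * (1-x^2)^e - (-1:ℝ)^n * (P.eval (-x) * x^m * (1-x^2)^e) := by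
      intro x; rw [hDeval]; ring
    simp only [h1]
    rw [intervalIntegral.integral_sub, horth m hm]
    · rw [intervalIntegral.integral_const_mul, hPnegorth m hm]; ring
    · exact polyWInt he (by fun_prop)
    · exact ((polyWInt he (g := fun x => P.eval (-x) * x^m) (by fun_prop))).const_mul _
  -- ∫ D² w = 0
  have hDD : (∫ x in (-1:ℝ)..1, D.eval x * D.eval x * (1-x^2)^e) = 0 := by
    have h4 : ∀ x : ℝ, D.eval x * D.eval x * (1-x^2)^e
        = ∑ m ∈ Finset.range n, D.coeff m * (D.eval x * x^m * (1-x^2)^e) := by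
      intro x
      nth_rewrite 2 [Polynomial.eval_eq_sum_range' hDlt]
      rw [Finset.mul_sum, Finset.sum_mul]
      exact Finset.sum_congr rfl fun m _ => by ring
    simp only [h4]
    rw [intervalIntegral.integral_finset_sum]
    · refine Finset.sum_eq_zero fun m hm => ?_
      rw [intervalIntegral.integral_const_mul, horthD m (Finset.mem_range.mp hm)]; ring
    · intro m _
      exact ((polyWInt he (g := fun x => D.eval x * x^m) (by fun_prop))).const_mul _
  -- positivity contradiction
  set f : ℝ → ℝ := fun x => D.eval x * D.eval x * (1-x^2)^e with hf
  have hfi : IntervalIntegrable f volume (-1) 1 := polyWInt he (by fun_prop)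
  have hnonneg : 0 ≤ᵐ[volume.restrict (Set.uIoc (-1:ℝ) 1)] f := by
    filter_upwards [ae_restrict_mem measurableSet_uIoc] with x hx
    rw [Set.uIoc_of_le (by norm_num : (-1:ℝ) ≤ 1)] at hx
    have h5 : (0:ℝ) ≤ 1 - x^2 := by nlinarith [hx.1, hx.2]
    have := Real.rpow_nonneg h5 e
    have := mul_self_nonneg (D.eval x)
    positivity
  have hS : ({x : ℝ | D.IsRoot x}).Finite :=
    Set.not_infinite.mp (fun h => hDne (D.eq_zero_of_infinite_isRoot h))
  have hsub : Set.Ioo (-1:ℝ) 1 \ {x : ℝ | D.IsRoot x} ⊆ Function.support f ∩ Set.Ioc (-1:ℝ) 1 := by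
    rintro x ⟨hx1, hx2⟩
    refine ⟨?_, hx1.1, le_of_lt hx1.2⟩
    simp only [Function.mem_support, hf]
    have hw : (0:ℝ) < (1-x^2)^e := Real.rpow_pos_of_pos (by nlinarith [hx1.1, hx1.2]) e
    have hDx : D.eval x ≠ 0 := fun h => hx2 h
    positivity
  have hmeas : 0 < volume (Function.support f ∩ Set.Ioc (-1:ℝ) 1) := by
    apply lt_of_lt_of_le _ (measure_mono hsub)
    rw [measure_diff_null (hS.measure_zero volume)]
    rw [Real.volume_Ioo]
    norm_num
  have hpos := (intervalIntegral.integral_pos_iff_support_of_nonneg_ae' hnonneg hfi).mpr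
    ⟨by norm_num, hmeas⟩
  rw [hDD] at hpos
  exact lt_irrefl 0 hpos

noncomputable def Eterm (L : ℕ → Polynomial ℝ) (n : ℕ) (z : ℂ) (j m : ℕ) : ℂ :=
  ((L n).coeff j : ℂ) * (Complex.I/2)^j * (j.choose m : ℂ) * (-z)^(j-m) * ((starRingEnd ℂ) z)^m

lemma expandKey (L : ℕ → Polynomial ℝ) (n : ℕ) (hdeg : (L n).natDegree = n) (z : ℂ) (θ : ℝ) :
    Polynomial.aeval
        ((Complex.I / 2) *
          ((starRingEnd ℂ) z * Complex.exp ((θ : ℂ) * Complex.I) -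
            z * Complex.exp (-(θ : ℂ) * Complex.I))) (L n)
      = ∑ j ∈ Finset.range (n+1), ∑ m ∈ Finset.range (j+1),
          Eterm L n z j m * Complex.exp (Complex.I * (2*(m:ℂ) - (j:ℂ)) * (θ:ℂ)) := by
  rw [Polynomial.aeval_eq_sum_range' (show (L n).natDegree < n+1 by omega)]
  refine Finset.sum_congr rfl fun j hj => ?_
  rw [show ((L n).coeff j) • ((Complex.I / 2) *
          ((starRingEnd ℂ) z * Complex.exp ((θ : ℂ) * Complex.I) -
            z * Complex.exp (-(θ : ℂ) * Complex.I)))^j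
      = ((L n).coeff j : ℂ) * ((Complex.I/2)^j *
          ((starRingEnd ℂ) z * Complex.exp ((θ : ℂ) * Complex.I) +
            -(z * Complex.exp (-(θ : ℂ) * Complex.I)))^j) by
    rw [Complex.real_smul, ← mul_pow]; ring_nf]
  rw [add_pow, Finset.mul_sum, Finset.mul_sum]
  refine Finset.sum_congr rfl fun m hm => ?_
  have hmle : m ≤ j := Nat.lt_succ_iff.mp (Finset.mem_range.mp hm)
  have hE : Complex.exp ((θ:ℂ)*Complex.I)^m * Complex.exp (-(θ:ℂ)*Complex.I)^(j-m)
      = Complex.exp (Complex.I * (2*(m:ℂ) - (j:ℂ)) * (θ:ℂ)) := by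
    rw [← Complex.exp_nat_mul, ← Complex.exp_nat_mul, ← Complex.exp_add]
    congr 1
    push_cast [hmle]
    ring
  rw [← hE, Eterm]
  ring

lemma intExp (d : ℤ) : (∫ θ in (0:ℝ)..(2*π), Complex.exp (Complex.I * (d:ℂ) * (θ:ℝ)))
    = if d = 0 then ((2*π:ℝ):ℂ) else 0 := by
  by_cases hd : d = 0
  · simp [hd]
  · have hc : (Complex.I * (d:ℂ)) ≠ 0 := by
      simp [Complex.I_ne_zero, hd]
    simp only [mul_assoc] at hc ⊢
    rw [show (fun θ : ℝ => Complex.exp (Complex.I * ((d:ℂ) * (θ:ℂ)))) = fun θ : ℝ =>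
      Complex.exp ((Complex.I * (d:ℂ)) * (θ:ℂ)) by funext θ; rw [mul_assoc]] at *
    rw [integral_exp_mul_complex hc]
    have h1 : Complex.exp (Complex.I * (d:ℂ) * ((2*π:ℝ):ℂ)) = 1 := by
      rw [show Complex.I * (d:ℂ) * ((2*π:ℝ):ℂ) = (d:ℂ) * (2*(π:ℂ)*Complex.I) by push_cast; ring]
      exact Complex.exp_int_mul_two_pi_mul_I d
    rw [mul_assoc, show ((2*π:ℝ):ℂ) = 2*(π:ℂ) by push_cast; ring] at h1
    rw [← mul_assoc] at h1
    simp [h1, hd]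

lemma GZvalue (γ : ℝ) (L : ℕ → Polynomial ℝ) (n : ℕ) (hdeg : (L n).natDegree = n)
    (k : ℕ) (z : ℂ) :
    GZ γ L n (k:ℤ) z = ∑ j ∈ Finset.range (n+1), ∑ m ∈ Finset.range (j+1),
      (if (j:ℤ) + 2*(k:ℤ) = (n:ℤ) + 2*(m:ℤ) then Eterm L n z j m else 0) := by
  rw [GZ]
  have h1 : ∀ θ : ℝ,
      Complex.exp (Complex.I * ((n : ℂ) - 2 * ((k:ℤ) : ℂ)) * (θ : ℂ)) *
        Polynomial.aeval
          ((Complex.I / 2) *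
            ((starRingEnd ℂ) z * Complex.exp ((θ : ℂ) * Complex.I) -
              z * Complex.exp (-(θ : ℂ) * Complex.I))) (L n)
      = ∑ j ∈ Finset.range (n+1), ∑ m ∈ Finset.range (j+1),
          Eterm L n z j m *
            Complex.exp (Complex.I * (((n:ℤ) + 2*(m:ℤ) - (j:ℤ) - 2*(k:ℤ) : ℤ):ℂ) * (θ:ℂ)) := by
    intro θ
    rw [expandKey L n hdeg z θ, Finset.mul_sum]
    refine Finset.sum_congr rfl fun j hj => ?_
    rw [Finset.mul_sum]
    refine Finset.sum_congr rfl fun m hm => ?_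
    rw [mul_left_comm, ← Complex.exp_add]
    congr 2
    push_cast
    ring
  simp only [h1]
  rw [intervalIntegral.integral_finset_sum (fun j hj => by
    apply Continuous.intervalIntegrable; fun_prop)]
  rw [Finset.mul_sum]
  refine Finset.sum_congr rfl fun j hj => ?_
  rw [intervalIntegral.integral_finset_sum (fun m hm => by
    apply Continuous.intervalIntegrable; fun_prop)]
  rw [Finset.mul_sum]
  refine Finset.sum_congr rfl fun m hm => ?_
  rw [intervalIntegral.integral_const_mul, intExp]
  have hπ : (π:ℝ) ≠ 0 := Real.pi_ne_zero
  split_ifs with h h2 h2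
  · push_cast
    rw [mul_comm, mul_assoc, mul_one_div, div_self (by simp [Real.pi_ne_zero] : (2*(π:ℂ)) ≠ 0), mul_one]
  · exfalso; apply h2; omega
  · exfalso; apply h; omega
  · simp

lemma fourierKey (γ : ℝ) (L : ℕ → Polynomial ℝ) (n : ℕ) (hdeg : (L n).natDegree = n)
    (hpar : ∀ j, (n + j) % 2 = 1 → (L n).coeff j = 0) (z : ℂ) (θ : ℝ) :
    Polynomial.aeval
        ((Complex.I / 2) *
          ((starRingEnd ℂ) z * Complex.exp ((θ : ℂ) * Complex.I) -
            z * Complex.exp (-(θ : ℂ) * Complex.I))) (L n)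
      = ∑ k ∈ Finset.range (n + 1),
          Complex.exp (-Complex.I * ((n : ℂ) - 2 * (k : ℂ)) * (θ : ℂ)) *
            GZ γ L n (k : ℤ) z := by
  rw [expandKey L n hdeg z θ]
  have hswap : ∑ k ∈ Finset.range (n + 1),
      Complex.exp (-Complex.I * ((n : ℂ) - 2 * (k : ℂ)) * (θ : ℂ)) * GZ γ L n (k : ℤ) z
      = ∑ j ∈ Finset.range (n+1), ∑ m ∈ Finset.range (j+1), ∑ k ∈ Finset.range (n+1),
          Complex.exp (-Complex.I * ((n : ℂ) - 2 * (k : ℂ)) * (θ : ℂ)) *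
            (if (j:ℤ) + 2*(k:ℤ) = (n:ℤ) + 2*(m:ℤ) then Eterm L n z j m else 0) := by
    simp only [GZvalue γ L n hdeg, Finset.mul_sum]
    rw [Finset.sum_comm]
    exact Finset.sum_congr rfl fun j _ => Finset.sum_comm
  rw [hswap]
  refine Finset.sum_congr rfl fun j hj => Finset.sum_congr rfl fun m hm => ?_
  have hjn : j ≤ n := Nat.lt_succ_iff.mp (Finset.mem_range.mp hj)
  have hmj : m ≤ j := Nat.lt_succ_iff.mp (Finset.mem_range.mp hm)
  by_cases hc : (L n).coeff j = 0
  · have hE : Eterm L n z j m = 0 := by simp [Eterm, hc]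
    simp [hE]
  · have hpar2 : (n + j) % 2 = 0 := by
      rcases Nat.mod_two_eq_zero_or_one (n + j) with h | h
      · exact h
      · exact absurd (hpar j h) hc
    set k₀ : ℕ := (n - j)/2 + m with hk₀
    have hknat : 2*k₀ + j = 2*m + n := by omega
    rw [Finset.sum_eq_single_of_mem k₀ (Finset.mem_range.mpr (by omega))]
    · rw [if_pos (by omega)]
      rw [mul_comm]
      congr 1
      congr 1
      have hc2 : ((2*k₀ + j : ℕ):ℂ) = ((2*m + n : ℕ):ℂ) := by rw [hknat]
      push_cast at hc2 ⊢
      linear_combination (-1 : ℂ) * Complex.I * (θ:ℂ) * hc2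
    · intro k hk hne
      rw [if_neg (by omega), mul_zero]

lemma coeffRep (γ : ℝ) (L : ℕ → Polynomial ℝ) (n : ℕ) (hdeg : (L n).natDegree = n)
    (hmon : (L n).Monic) (k : ℕ) (hk : k ≤ n) :
    ∃ c : ℕ × ℕ → ℂ,
      (∀ z : ℂ, GZ γ L n (k : ℤ) z
          = ∑ ab ∈ (Finset.range (n + 1) ×ˢ Finset.range (n + 1)).filter
              (fun ab => ab.1 + ab.2 ≤ n),
              c ab * z ^ ab.1 * ((starRingEnd ℂ) z) ^ ab.2) ∧
      c (n - k, k) = (-1) ^ k * (n.choose k : ℂ) / (2 * Complex.I) ^ n ∧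
      (∀ a b : ℕ, a + b = n → (a, b) ≠ (n - k, k) → c (a, b) = 0) := by
  refine ⟨fun ab => if (ab.1:ℤ) + 2*(k:ℤ) = (n:ℤ) + (ab.2:ℤ) then
      ((L n).coeff (ab.1+ab.2) : ℂ) * (Complex.I/2)^(ab.1+ab.2) *
        ((ab.1+ab.2).choose ab.2 : ℂ) * (-1:ℂ)^ab.1 else 0, ?_, ?_, ?_⟩
  · intro z
    rw [GZvalue γ L n hdeg k z, Finset.sum_sigma']
    refine Finset.sum_nbij' (fun p => (p.1 - p.2, p.2)) (fun q => (⟨q.1 + q.2, q.2⟩ : Σ _ : ℕ, ℕ))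
      ?_ ?_ ?_ ?_ ?_
    · rintro ⟨j, m⟩ hp
      simp only [Finset.mem_sigma, Finset.mem_range] at hp
      simp only [Finset.mem_filter, Finset.mem_product, Finset.mem_range]
      omega
    · rintro ⟨a, b⟩ hq
      simp only [Finset.mem_filter, Finset.mem_product, Finset.mem_range] at hq
      simp only [Finset.mem_sigma, Finset.mem_range]
      omega
    · rintro ⟨j, m⟩ hp
      simp only [Finset.mem_sigma, Finset.mem_range] at hp
      have : m ≤ j := by omega
      simp [Nat.sub_add_cancel this]
    · rintro ⟨a, b⟩ hq
      simp
    · rintro ⟨j, m⟩ hp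
      simp only [Finset.mem_sigma, Finset.mem_range] at hp
      have hmj : m ≤ j := by omega
      simp only []
      rw [show j - m + m = j from Nat.sub_add_cancel hmj]
      split_ifs with h1 h2 h2
      · rw [Eterm, show ((-z)^(j-m) : ℂ) = (-1:ℂ)^(j-m) * z^(j-m) by rw [neg_pow]]
        ring
      · exfalso; apply h2; push_cast [Nat.cast_sub hmj] at *; omega
      · exfalso; apply h1; push_cast [Nat.cast_sub hmj] at *; omega
      · simp
  · have hcond : ((n - k : ℕ):ℤ) + 2*(k:ℤ) = (n:ℤ) + (k:ℤ) := by
      push_cast [Nat.cast_sub hk]; ring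
    simp only [hcond, if_pos]
    rw [show n - k + k = n from Nat.sub_add_cancel hk]
    rw [show (L n).coeff n = 1 from by
      have := hmon.coeff_natDegree; rwa [hdeg] at this]
    have h2I : ((2:ℂ)*Complex.I)^n ≠ 0 := pow_ne_zero _ (by simp [Complex.I_ne_zero])
    push_cast
    rw [eq_div_iff h2I]
    have e1 : (Complex.I/2)^n * ((2:ℂ)*Complex.I)^n = (-1:ℂ)^n := by
      rw [← mul_pow]
      congr 1
      linear_combination Complex.I_mul_I
    have e2 : ((-1:ℂ))^n * (-1:ℂ)^(n-k) = (-1:ℂ)^k := by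
      rw [← pow_add, show n + (n-k) = k + 2*(n-k) by omega, pow_add, pow_mul]
      simp
    linear_combination (n.choose k : ℂ) * (-1:ℂ)^(n-k) * e1 + (n.choose k : ℂ) * e2
  · intro a b hab hne
    dsimp only
    rw [if_neg]
    intro hcond
    apply hne
    have h1 : a = n - k ∧ b = k := by omega
    simp [h1.1, h1.2]

lemma nonvanish (γ : ℝ) (L : ℕ → Polynomial ℝ) (n k : ℕ) (hk : k ≤ n) (c : ℕ × ℕ → ℂ)
    (hrep : ∀ z : ℂ, GZ γ L n (k : ℤ) z
        = ∑ ab ∈ (Finset.range (n + 1) ×ˢ Finset.range (n + 1)).filter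
            (fun ab => ab.1 + ab.2 ≤ n),
            c ab * z ^ ab.1 * ((starRingEnd ℂ) z) ^ ab.2)
    (hc1 : c (n - k, k) = (-1) ^ k * (n.choose k : ℂ) / (2 * Complex.I) ^ n)
    (hc0 : ∀ a b : ℕ, a + b = n → (a, b) ≠ (n - k, k) → c (a, b) = 0) :
    ∃ z ∈ Metric.closedBall (0 : ℂ) 1, GZ γ L n (k : ℤ) z ≠ 0 := by
  set S := (Finset.range (n + 1) ×ˢ Finset.range (n + 1)).filter
      (fun ab : ℕ × ℕ => ab.1 + ab.2 ≤ n) with hS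
  set q : Polynomial ℂ :=
    ∑ ab ∈ S, Polynomial.C (c ab) * Polynomial.X ^ (ab.1 + ab.2) with hq
  have hmem : ((n - k, k) : ℕ × ℕ) ∈ S := by
    simp only [hS, Finset.mem_filter, Finset.mem_product, Finset.mem_range]
    omega
  have hqcoeff : q.coeff n = c (n - k, k) := by
    rw [hq, Polynomial.finset_sum_coeff]
    simp only [Polynomial.coeff_C_mul, Polynomial.coeff_X_pow]
    rw [Finset.sum_eq_single_of_mem ((n - k, k) : ℕ × ℕ) hmem]
    · simp [Nat.sub_add_cancel hk]
    · intro ab hab hne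
      by_cases h : n = ab.1 + ab.2
      · rw [hc0 ab.1 ab.2 h.symm (by rwa [Prod.mk.eta])]
        simp
      · simp [h]
  have hcne : c (n - k, k) ≠ 0 := by
    rw [hc1]
    apply div_ne_zero
    · apply mul_ne_zero
      · exact pow_ne_zero _ (by norm_num)
      · exact_mod_cast Nat.cast_ne_zero.mpr (Nat.choose_pos hk).ne'
    · exact pow_ne_zero _ (by simp [Complex.I_ne_zero])
  have hq0 : q ≠ 0 := fun h => hcne (by rw [← hqcoeff, h, Polynomial.coeff_zero])
  have hfin : {x : ℂ | q.IsRoot x}.Finite :=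
    Set.not_infinite.mp (fun h => hq0 (q.eq_zero_of_infinite_isRoot h))
  have hinf : ((fun r : ℝ => (r:ℂ)) '' (Set.Ioo (0:ℝ) 1)).Infinite :=
    (Set.Ioo_infinite (by norm_num)).image (Complex.ofReal_injective.injOn)
  obtain ⟨x, hx1, hx2⟩ := (hinf.diff hfin).nonempty
  obtain ⟨r, hr, rfl⟩ := hx1
  refine ⟨(r:ℂ), ?_, ?_⟩
  · simp only [Metric.mem_closedBall, dist_zero_right, Complex.norm_real]
    rw [Real.norm_eq_abs, _root_.abs_of_nonneg (le_of_lt hr.1)]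
    exact le_of_lt hr.2
  · rw [hrep]
    have heval : q.eval (r:ℂ) = ∑ ab ∈ S,
        c ab * (r:ℂ) ^ ab.1 * ((starRingEnd ℂ) (r:ℂ)) ^ ab.2 := by
      rw [hq, Polynomial.eval_finset_sum]
      refine Finset.sum_congr rfl fun ab _ => ?_
      simp only [Polynomial.eval_mul, Polynomial.eval_C, Polynomial.eval_pow,
        Polynomial.eval_X, Complex.conj_ofReal, pow_add]
      ring
    rw [← heval]
    exact fun h => hx2 h

/-- Fourier expansion
`L_n^γ((i/2)(z̄ e^{iθ} - z e^{-iθ})) = Σ_{k=0}^n e^{-i(n-2k)θ} G_{n,k}^γ(z)`; moreover for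
`0 ≤ k ≤ n`, `G_{n,k}^γ` is a polynomial in `(z, z̄)` of total degree `n` whose degree-`n` part is
`g_{n,k}^γ z^{n-k} z̄^k` with `g_{n,k}^γ = (-1)^k binom(n,k) / (2i)^n`; in particular `G_{n,k}^γ`
is not identically zero on `𝔻`. -/
theorem Gnk_fourier_and_leading_term (γ : ℝ) (hγ : -1 < γ)
    (L : ℕ → Polynomial ℝ) (hL : IsMonicOrtho γ L) (n : ℕ) :
    (∀ z ∈ Metric.closedBall (0 : ℂ) 1, ∀ θ : ℝ,
      Polynomial.aeval
          ((Complex.I / 2) *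
            ((starRingEnd ℂ) z * Complex.exp ((θ : ℂ) * Complex.I) -
              z * Complex.exp (-(θ : ℂ) * Complex.I))) (L n)
        = ∑ k ∈ Finset.range (n + 1),
            Complex.exp (-Complex.I * ((n : ℂ) - 2 * (k : ℂ)) * (θ : ℂ)) *
              GZ γ L n (k : ℤ) z) ∧
    (∀ k : ℕ, k ≤ n →
      (∃ c : ℕ × ℕ → ℂ,
        (∀ z : ℂ, GZ γ L n (k : ℤ) z
            = ∑ ab ∈ (Finset.range (n + 1) ×ˢ Finset.range (n + 1)).filter
                (fun ab => ab.1 + ab.2 ≤ n),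
                c ab * z ^ ab.1 * ((starRingEnd ℂ) z) ^ ab.2) ∧
        c (n - k, k) = (-1) ^ k * (n.choose k : ℂ) / (2 * Complex.I) ^ n ∧
        (∀ a b : ℕ, a + b = n → (a, b) ≠ (n - k, k) → c (a, b) = 0)) ∧
      ∃ z ∈ Metric.closedBall (0 : ℂ) 1, GZ γ L n (k : ℤ) z ≠ 0) := by
  obtain ⟨hmon, hdeg, -⟩ := hL n
  have hpar : ∀ j, (n + j) % 2 = 1 → (L n).coeff j = 0 :=
    fun j hj => parity γ hγ L hL n j hj
  constructor
  · intro z _ θ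
    exact fourierKey γ L n hdeg hpar z θ
  · intro k hk
    obtain ⟨c, h1, h2, h3⟩ := coeffRep γ L n hdeg hmon k hk
    exact ⟨⟨c, h1, h2, h3⟩, nonvanish γ L n k hk c h1 h2 h3⟩

end
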